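/- arXiv:1611.08818 — 2 statements merged into one kernel-verified Lean document; each statement's English description precedes it below -/
import Mathlib

section
/- Let R be a commutative ring and let A', A, B, C', C, D be R-modules. Suppose given R-linear maps α'₁ : A' → B, α'₂ : A' → C', α₁ : A → B, α₂ : A → C, β₁ : B → D, β'₂ : C' → D, β₂ : C → D, and R-linear maps γ : A' → A, ψ : B → B, φ : C' → C, τ : D → D such that: (a) the sequence 0 → A' → B ⊕ C' → D → 0 is exact, where the first map is a' ↦ (α'₁ a', α'₂ a') and the second map is (b, c') ↦ β₁ b + β'₂ c'; (b) the sequence 0 → A → B ⊕ C → D → 0 is exact, where the first map is a ↦ (α₁ a, α₂ a) and the second map is (b, c) ↦ β₁ b + β₂ c; (c) α₁ ∘ γ = ψ ∘ α'₁, α₂ ∘ γ = φ ∘ α'₂, τ ∘ β₁ = β₁ ∘ ψ, and τ ∘ β'₂ = β₂ ∘ φ; (d) for every d in the kernel of τ there exist b in the kernel of ψ and c' in the kernel of φ with d = β₁ b + β'₂ c'; (e) the image of α₁ is contained in the image of ψ; (f) the image of β₂ is contained in the image of τ. Then α₂ maps the image of γ into the image of φ, and the induced R-linear map A/Im(γ)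 → C/Im(φ) is an isomorphism. -/
/-- Abstract snake-lemma diagram chase: the two rows are the blow-up exact
sequences `0 → A' → B ⊕ C' → D → 0` and `0 → A → B ⊕ C → D → 0`, and the
conclusion is the induced isomorphism `A/Im(γ) ≅ C/Im(φ)`. -/
theorem stmt0
    {R : Type*} [CommRing R]
    {A' A B C' C D : Type*}
    [AddCommGroup A'] [Module R A'] [AddCommGroup A] [Module R A]
    [AddCommGroup B] [Module R B] [AddCommGroup C'] [Module R C']
    [AddCommGroup C] [Module R C] [AddCommGroup D] [Module R D]
    (α'₁ : A' →ₗ[R] B) (α'₂ : A' →ₗ[R] C')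
    (α₁ : A →ₗ[R] B) (α₂ : A →ₗ[R] C)
    (β₁ : B →ₗ[R] D) (β'₂ : C' →ₗ[R] D) (β₂ : C →ₗ[R] D)
    (γ : A' →ₗ[R] A) (ψ : B →ₗ[R] B) (φ : C' →ₗ[R] C) (τ : D →ₗ[R] D)
    -- (a) exactness of 0 → A' → B ⊕ C' → D → 0
    (hinj' : Function.Injective (LinearMap.prod α'₁ α'₂))
    (hsurj' : Function.Surjective (LinearMap.coprod β₁ β'₂))
    (hexact' : LinearMap.ker (LinearMap.coprod β₁ β'₂)
      = LinearMap.range (LinearMap.prod α'₁ α'₂))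
    -- (b) exactness of 0 → A → B ⊕ C → D → 0
    (hinj : Function.Injective (LinearMap.prod α₁ α₂))
    (hsurj : Function.Surjective (LinearMap.coprod β₁ β₂))
    (hexact : LinearMap.ker (LinearMap.coprod β₁ β₂)
      = LinearMap.range (LinearMap.prod α₁ α₂))
    -- (c) commutativity of the diagram
    (hc1 : α₁.comp γ = ψ.comp α'₁)
    (hc2 : α₂.comp γ = φ.comp α'₂)
    (hc3 : τ.comp β₁ = β₁.comp ψ)
    (hc4 : τ.comp β'₂ = β₂.comp φ)
    -- (d) every element of ker τ comes from ker ψ and ker φ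
    (hd : ∀ d : D, τ d = 0 → ∃ b : B, ∃ c' : C', ψ b = 0 ∧ φ c' = 0 ∧ d = β₁ b + β'₂ c')
    -- (e) Im(α₁) ⊆ Im(ψ)
    (he : LinearMap.range α₁ ≤ LinearMap.range ψ)
    -- (f) Im(β₂) ⊆ Im(τ)
    (hf : LinearMap.range β₂ ≤ LinearMap.range τ) :
    Submodule.map α₂ (LinearMap.range γ) ≤ LinearMap.range φ ∧
    ∃ e : (A ⧸ LinearMap.range γ) ≃ₗ[R] (C ⧸ LinearMap.range φ),
      ∀ a : A, e (Submodule.Quotient.mk a) = Submodule.Quotient.mk (α₂ a) := by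
  -- commutation as pointwise equalities
  have hc1' : ∀ a', α₁ (γ a') = ψ (α'₁ a') := fun a' => LinearMap.congr_fun hc1 a'
  have hc2' : ∀ a', α₂ (γ a') = φ (α'₂ a') := fun a' => LinearMap.congr_fun hc2 a'
  have hc3' : ∀ b, τ (β₁ b) = β₁ (ψ b) := fun b => LinearMap.congr_fun hc3 b
  have hc4' : ∀ c', τ (β'₂ c') = β₂ (φ c') := fun c' => LinearMap.congr_fun hc4 c'
  have hrow : ∀ a : A, β₁ (α₁ a) + β₂ (α₂ a) = 0 := by
    intro a
    have : (α₁ a, α₂ a) ∈ LinearMap.ker (LinearMap.coprod β₁ β₂) := by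
      rw [hexact]; exact ⟨a, rfl⟩
    simpa [LinearMap.coprod_apply] using this
  have hmap : Submodule.map α₂ (LinearMap.range γ) ≤ LinearMap.range φ := by
    rintro c ⟨a, ⟨a', rfl⟩, rfl⟩
    exact ⟨α'₂ a', (hc2' a').symm⟩
  refine ⟨hmap, ?_⟩
  set f : A →ₗ[R] C ⧸ LinearMap.range φ :=
    (LinearMap.range φ).mkQ.comp α₂ with hf_def
  have hker : LinearMap.range γ ≤ LinearMap.ker f := by
    rintro a ⟨a', rfl⟩
    simp only [hf_def, LinearMap.mem_ker, LinearMap.comp_apply, Submodule.mkQ_apply]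
    rw [hc2' a']
    exact (Submodule.Quotient.mk_eq_zero _).2 ⟨α'₂ a', rfl⟩
  set g := Submodule.liftQ (LinearMap.range γ) f hker with hg_def
  have hg : ∀ a : A, g (Submodule.Quotient.mk a) = Submodule.Quotient.mk (α₂ a) :=
    fun a => rfl
  have hsur : Function.Surjective g := by
    intro x
    obtain ⟨c, rfl⟩ := Submodule.mkQ_surjective _ x
    -- β₂ c ∈ Im τ
    obtain ⟨d, hd0⟩ := hf ⟨c, rfl⟩
    obtain ⟨⟨b, c'⟩, hbc⟩ := hsurj' d
    have hbc' : β₁ b + β'₂ c' = d := hbc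
    have h1 : β₁ (ψ b) + β₂ (φ c' - c) = 0 := by
      have h0 : τ (β₁ b + β'₂ c') = β₂ c := by rw [hbc']; exact hd0
      rw [map_add, hc3', hc4'] at h0
      rw [map_sub, ← h0]; abel
    have h2 : (ψ b, φ c' - c) ∈ LinearMap.range (LinearMap.prod α₁ α₂) := by
      rw [← hexact]
      simpa [LinearMap.coprod_apply] using h1
    obtain ⟨a, ha⟩ := h2
    have ha1 : α₁ a = ψ b := congrArg Prod.fst ha
    have ha2 : α₂ a = φ c' - c := congrArg Prod.snd ha
    refine ⟨Submodule.Quotient.mk (-a), ?_⟩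
    rw [hg, map_neg, ha2]
    refine (Submodule.Quotient.eq _).2 ?_
    exact ⟨-c', by simp only [map_neg, ha2]; abel⟩
  have hinjg : Function.Injective g := by
    rw [← LinearMap.ker_eq_bot]
    rw [Submodule.eq_bot_iff]
    intro x hx
    obtain ⟨a, rfl⟩ := Submodule.mkQ_surjective _ x
    have hx' : (Submodule.Quotient.mk (α₂ a) : C ⧸ LinearMap.range φ) = 0 := by
      rw [← hg a]; exact hx
    obtain ⟨c', hc'⟩ := (Submodule.Quotient.mk_eq_zero _).1 hx'
    -- hc' : φ c' = α₂ a
    obtain ⟨b, hb⟩ := he ⟨a, rfl⟩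
    -- hb : ψ b = α₁ a
    have hτ : τ (β₁ b + β'₂ c') = 0 := by
      rw [map_add, hc3', hc4', hb, hc']
      exact hrow a
    obtain ⟨b₀, c'₀, hb₀, hc'₀, heq⟩ := hd _ hτ
    have h3 : (b - b₀, c' - c'₀) ∈ LinearMap.range (LinearMap.prod α'₁ α'₂) := by
      rw [← hexact']
      have : β₁ (b - b₀) + β'₂ (c' - c'₀) = 0 := by
        rw [map_sub, map_sub, sub_add_sub_comm, heq, sub_self]
      simpa [LinearMap.coprod_apply] using this
    obtain ⟨a', ha'⟩ := h3
    have ha'1 : α'₁ a' = b - b₀ := congrArg Prod.fst ha'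
    have ha'2 : α'₂ a' = c' - c'₀ := congrArg Prod.snd ha'
    have key : γ a' = a := by
      apply hinj
      have e1 : α₁ (γ a') = α₁ a := by
        rw [hc1' a', ha'1, map_sub, hb₀, hb]; abel
      have e2 : α₂ (γ a') = α₂ a := by
        rw [hc2' a', ha'2, map_sub, hc'₀, hc']; abel
      exact Prod.ext e1 e2
    rw [Submodule.mkQ_apply, Submodule.Quotient.mk_eq_zero]
    exact ⟨a', key⟩
  exact ⟨LinearEquiv.ofBijective g ⟨hinjg, hsur⟩, hg⟩
end

section
/- Let R be a commutative ring and let Z, E, V, Y be R-modules. Suppose given R-linear maps u : Z → E, v : E → Z, w : Z → E, i : E → Y, q : V → Y, r : Y → V such that: (a) v ∘ u = id_Z; (b) v ∘ w = 0; (c) every element of E can be written in the form w(b₁) + u(b₂) for some b₁, b₂ ∈ Z; (d) i ∘ u ∘ v = q ∘ r ∘ i; (e) q is injective; (f) the kernel of r is contained in the image of i. Then for every c ∈ Y with q(r(c)) = 0 there exists d ∈ E with u(v(d)) = 0 and c = i(d). -/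
/-- Abstract form of Lemma 3.8 (surjectivity of the arrow `g` in the snake
exact sequence). -/
theorem stmt1
    {R : Type*} [CommRing R]
    {Z E V Y : Type*}
    [AddCommGroup Z] [Module R Z] [AddCommGroup E] [Module R E]
    [AddCommGroup V] [Module R V] [AddCommGroup Y] [Module R Y]
    (u : Z →ₗ[R] E) (v : E →ₗ[R] Z) (w : Z →ₗ[R] E)
    (i : E →ₗ[R] Y) (q : V →ₗ[R] Y) (r : Y →ₗ[R] V)
    (ha : v.comp u = LinearMap.id)
    (hb : v.comp w = 0)
    (hc : ∀ e : E, ∃ b₁ b₂ : Z, e = w b₁ + u b₂)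
    (hd : i.comp (u.comp v) = q.comp (r.comp i))
    (he : Function.Injective q)
    (hf : LinearMap.ker r ≤ LinearMap.range i) :
    ∀ c : Y, q (r c) = 0 → ∃ d : E, u (v d) = 0 ∧ c = i d := by
  intro c hqc
  have hrc : r c = 0 := he (by simpa using hqc)
  obtain ⟨e, he'⟩ := hf (LinearMap.mem_ker.mpr hrc)
  refine ⟨e - u (v e), ?_, ?_⟩
  · have hvu : v (u (v e)) = v e := congrArg (· (v e)) ha
    simp [map_sub, hvu]
  · have h1 : i (u (v e)) = q (r (i e)) := congrArg (· e) hd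
    rw [map_sub, h1, he', hrc]
    simp
end
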